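/- arXiv:1202.5915 — 6 statements merged into one kernel-verified Lean document; each statement's English description precedes it below -/
import Mathlib

section
/- For every f ∈ H and all λ, λ' > 0 the following identity holds: (λ + λ') · Re⟪u_λ, u_{λ'}⟫ = ‖S^{1/2}(u_λ - u_{λ'})‖² + λ‖u_λ‖² + λ'‖u_{λ'}‖². -/
open ContinuousLinearMap Filter Topology

/-- The resolvent identity
`(λ + λ') Re⟪u_λ, u_{λ'}⟫ = ‖S^{1/2}(u_λ - u_{λ'})‖² + λ‖u_λ‖² + λ'‖u_{λ'}‖²`
where `u_λ = (λI - G)⁻¹ f`, `G = -S + A`. -/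
theorem resolvent_identity
    {H : Type*} [NormedAddCommGroup H] [InnerProductSpace ℂ H] [CompleteSpace H]
    (S A : H →L[ℂ] H)
    (hS : S.IsPositive)
    (hA : ContinuousLinearMap.adjoint A = -A)
    -- `S^{1/2}`: the (unique) positive square root of `S`
    (sqrtS : H →L[ℂ] H) (hsqrtS_pos : sqrtS.IsPositive) (hsqrtS_sq : sqrtS * sqrtS = S)
    -- the resolvent `(λ I - G)⁻¹` of `G = -S + A` exists for `λ > 0`
    (hres : ∀ l : ℝ, 0 < l → IsUnit ((l : ℂ) • (1 : H →L[ℂ] H) - (-S + A)))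
    (f : H) (l l' : ℝ) (hl : 0 < l) (hl' : 0 < l') :
    (l + l') * (inner ℂ ((Ring.inverse ((l : ℂ) • (1 : H →L[ℂ] H) - (-S + A))) f)
        ((Ring.inverse ((l' : ℂ) • (1 : H →L[ℂ] H) - (-S + A))) f) : ℂ).re =
      ‖sqrtS ((Ring.inverse ((l : ℂ) • (1 : H →L[ℂ] H) - (-S + A))) f
          - (Ring.inverse ((l' : ℂ) • (1 : H →L[ℂ] H) - (-S + A))) f)‖ ^ 2
      + l * ‖(Ring.inverse ((l : ℂ) • (1 : H →L[ℂ] H) - (-S + A))) f‖ ^ 2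
      + l' * ‖(Ring.inverse ((l' : ℂ) • (1 : H →L[ℂ] H) - (-S + A))) f‖ ^ 2 := by
  set u := (Ring.inverse ((l : ℂ) • (1 : H →L[ℂ] H) - (-S + A))) f with hu_def
  set v := (Ring.inverse ((l' : ℂ) • (1 : H →L[ℂ] H) - (-S + A))) f with hv_def
  have hu : (l : ℂ) • u - (-S + A) u = f := by
    have h := Ring.mul_inverse_cancel _ (hres l hl)
    have h2 : (((l : ℂ) • (1 : H →L[ℂ] H) - (-S + A)) *
        Ring.inverse ((l : ℂ) • (1 : H →L[ℂ] H) - (-S + A))) f = f := by rw [h]; rfl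
    simpa only [ContinuousLinearMap.mul_apply, ContinuousLinearMap.sub_apply, ContinuousLinearMap.smul_apply, ContinuousLinearMap.one_apply] using h2
  have hv : (l' : ℂ) • v - (-S + A) v = f := by
    have h := Ring.mul_inverse_cancel _ (hres l' hl')
    have h2 : (((l' : ℂ) • (1 : H →L[ℂ] H) - (-S + A)) *
        Ring.inverse ((l' : ℂ) • (1 : H →L[ℂ] H) - (-S + A))) f = f := by rw [h]; rfl
    simpa only [ContinuousLinearMap.mul_apply, ContinuousLinearMap.sub_apply, ContinuousLinearMap.smul_apply, ContinuousLinearMap.one_apply] using h2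
  set w := u - v with hw
  have hkey : (l : ℂ) • u - (l' : ℂ) • v = (-S + A) u - (-S + A) v :=
    sub_eq_sub_iff_sub_eq_sub.mp (hu.trans hv.symm)
  have hinner : (inner ℂ w ((l : ℂ) • u - (l' : ℂ) • v) : ℂ) = inner ℂ w ((-S + A) w) := by
    rw [hkey, hw, map_sub]
  -- A part has zero real part
  have hA0 : (inner ℂ w (A w) : ℂ).re = 0 := by
    have h1 : (inner ℂ w (A w) : ℂ) = inner ℂ ((ContinuousLinearMap.adjoint A) w) w :=
      (ContinuousLinearMap.adjoint_inner_left A w w).symm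
    rw [hA] at h1
    have h2 : ((inner ℂ (A w) w : ℂ)).re = ((inner ℂ w (A w) : ℂ)).re := by
      rw [← inner_conj_symm w (A w), Complex.conj_re]
    have h3 := congrArg Complex.re h1
    simp only [ContinuousLinearMap.neg_apply, inner_neg_left, Complex.neg_re] at h3
    linarith
  -- S part
  have hSre : (inner ℂ w (S w) : ℂ).re = ‖sqrtS w‖ ^ 2 := by
    have h1 : S w = sqrtS (sqrtS w) := by rw [← hsqrtS_sq]; rfl
    have h2 : (inner ℂ w (sqrtS (sqrtS w)) : ℂ) = inner ℂ (sqrtS w) (sqrtS w) := by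
      rw [← ContinuousLinearMap.adjoint_inner_left sqrtS, hsqrtS_pos.isSelfAdjoint.adjoint_eq]
    rw [h1, h2, inner_self_eq_norm_sq_to_K]; norm_cast
  have hRHS : (inner ℂ w ((-S + A) w) : ℂ).re = -‖sqrtS w‖ ^ 2 + (0 : ℝ) := by
    simp only [add_apply, neg_apply, inner_add_right, inner_neg_right, Complex.add_re,
      Complex.neg_re, hSre, hA0]
  -- left side real part
  have huu : (inner ℂ u u : ℂ).re = ‖u‖ ^ 2 := by
    rw [inner_self_eq_norm_sq_to_K]; norm_cast
  have hvv : (inner ℂ v v : ℂ).re = ‖v‖ ^ 2 := by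
    rw [inner_self_eq_norm_sq_to_K]; norm_cast
  have hvu : (inner ℂ v u : ℂ).re = (inner ℂ u v : ℂ).re := by
    rw [← inner_conj_symm v u, Complex.conj_re]
  have hLHS : (inner ℂ w ((l : ℂ) • u - (l' : ℂ) • v) : ℂ).re
      = l * (‖u‖ ^ 2 - (inner ℂ u v : ℂ).re) - l' * ((inner ℂ u v : ℂ).re - ‖v‖ ^ 2) := by
    simp only [hw, inner_sub_left, inner_sub_right, inner_smul_right, Complex.sub_re,
      Complex.mul_re, Complex.ofReal_re, Complex.ofReal_im, zero_mul, sub_zero]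
    rw [huu, hvv, hvu]
  have hre := congrArg Complex.re hinner
  rw [hLHS, hRHS] at hre
  linarith
end

section
/- For every λ > 0, the operator I - B_λ is invertible and the resolvent of G factorizes as (λI - G)⁻¹ = (λI + S)^{-1/2} (I - B_λ)⁻¹ (λI + S)^{-1/2}. -/
open ContinuousLinearMap Filter Topology

/-- The resolvent factorization
`(λI - G)⁻¹ = (λI + S)^{-1/2} (I - B_λ)⁻¹ (λI + S)^{-1/2}`, where `G = -S + A` and
`B_λ = (λI+S)^{-1/2} A (λI+S)^{-1/2}`; in particular `I - B_λ` is invertible. -/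
theorem resolvent_factorization
    {H : Type*} [NormedAddCommGroup H] [InnerProductSpace ℂ H] [CompleteSpace H]
    (S A : H →L[ℂ] H)
    (hS : S.IsPositive)
    (hA : ContinuousLinearMap.adjoint A = -A)
    -- `sq l = (l I + S)^{1/2}`: the positive square root of `l I + S`, invertible for `l > 0`
    (sq : ℝ → H →L[ℂ] H)
    (hsq_pos : ∀ l : ℝ, 0 < l → (sq l).IsPositive)
    (hsq_sq : ∀ l : ℝ, 0 < l → sq l * sq l = (l : ℂ) • (1 : H →L[ℂ] H) + S)
    (hsq_unit : ∀ l : ℝ, 0 < l → IsUnit (sq l))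
    -- the resolvent `(λ I - G)⁻¹` of `G = -S + A` exists for `λ > 0`
    (hres : ∀ l : ℝ, 0 < l → IsUnit ((l : ℂ) • (1 : H →L[ℂ] H) - (-S + A)))
    (l : ℝ) (hl : 0 < l) :
    IsUnit (1 - Ring.inverse (sq l) * A * Ring.inverse (sq l)) ∧
    Ring.inverse ((l : ℂ) • (1 : H →L[ℂ] H) - (-S + A)) =
      Ring.inverse (sq l) *
        Ring.inverse (1 - Ring.inverse (sq l) * A * Ring.inverse (sq l)) *
        Ring.inverse (sq l) := by
  set u := sq l with hu_def
  have hu : IsUnit u := hsq_unit l hl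
  set v := Ring.inverse u with hv_def
  have huv : u * v = 1 := Ring.mul_inverse_cancel u hu
  have hvu : v * u = 1 := Ring.inverse_mul_cancel u hu
  set r := (l : ℂ) • (1 : H →L[ℂ] H) - (-S + A) with hr_def
  have hr : IsUnit r := hres l hl
  set B := v * A * v with hB_def
  -- key factorization
  have hfact : r = u * (1 - B) * u := by
    have : u * (1 - B) * u = u * u - (u * v) * A * (v * u) := by
      rw [hB_def]; noncomm_ring
    rw [this, huv, hvu, hsq_sq l hl, hr_def]
    noncomm_ring
  have h1B : (1 : H →L[ℂ] H) - B = v * r * v := by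
    rw [hfact]
    symm
    calc v * (u * (1 - B) * u) * v = (v * u) * (1 - B) * (u * v) := by noncomm_ring
      _ = 1 - B := by rw [huv, hvu]; noncomm_ring
  have hvunit : IsUnit v := isUnit_ringInverse.mpr hu
  have hBunit : IsUnit (1 - B) := by
    rw [h1B]; exact (hvunit.mul hr).mul hvunit
  refine ⟨hBunit, ?_⟩
  set w := v * Ring.inverse (1 - B) * v with hw_def
  have hrw : r * w = 1 := by
    rw [hfact, hw_def]
    calc u * (1 - B) * u * (v * Ring.inverse (1 - B) * v)
        = u * ((1 - B) * ((u * v) * Ring.inverse (1 - B)) * v) := by noncomm_ring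
      _ = u * ((1 - B) * Ring.inverse (1 - B)) * v := by rw [huv]; noncomm_ring
      _ = u * v := by rw [Ring.mul_inverse_cancel _ hBunit]; noncomm_ring
      _ = 1 := huv
  calc Ring.inverse r = Ring.inverse r * (r * w) := by rw [hrw, mul_one]
    _ = (Ring.inverse r * r) * w := by noncomm_ring
    _ = w := by rw [Ring.inverse_mul_cancel r hr, one_mul]
end

section
/- Suppose B : H → H is a bounded operator such that A = S^{1/2} B S^{1/2}. Then for every λ > 0, B_λ = S^{1/2}(λI + S)^{-1/2} · B · S^{1/2}(λI + S)^{-1/2}, and B_λ → B in the strong operator topology as λ → 0⁺, i.e., B_λ x → B x for every x ∈ H. -/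
set_option maxHeartbeats 1000000
set_option synthInstance.maxHeartbeats 400000

open ContinuousLinearMap Filter Topology

/-- If `A = S^{1/2} B S^{1/2}` for a bounded `B`, then
`B_λ = S^{1/2}(λI+S)^{-1/2} · B · S^{1/2}(λI+S)^{-1/2}` for every `λ > 0`, and
`B_λ → B` in the strong operator topology as `λ → 0⁺`, where
`B_λ = (λI+S)^{-1/2} A (λI+S)^{-1/2}`. -/
theorem Blambda_strong_convergence
    {H : Type*} [NormedAddCommGroup H] [InnerProductSpace ℂ H] [CompleteSpace H]
    (S A : H →L[ℂ] H)
    (hS : S.IsPositive) (hSinj : Function.Injective S)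
    (hA : ContinuousLinearMap.adjoint A = -A)
    -- `S^{1/2}`: the (unique) positive square root of `S`
    (sqrtS : H →L[ℂ] H) (hsqrtS_pos : sqrtS.IsPositive) (hsqrtS_sq : sqrtS * sqrtS = S)
    -- `sq l = (l I + S)^{1/2}`: the positive square root of `l I + S`, invertible for `l > 0`
    (sq : ℝ → H →L[ℂ] H)
    (hsq_pos : ∀ l : ℝ, 0 < l → (sq l).IsPositive)
    (hsq_sq : ∀ l : ℝ, 0 < l → sq l * sq l = (l : ℂ) • (1 : H →L[ℂ] H) + S)
    (hsq_unit : ∀ l : ℝ, 0 < l → IsUnit (sq l))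
    -- `B` bounded with `A = S^{1/2} B S^{1/2}`
    (B : H →L[ℂ] H) (hB : A = sqrtS * B * sqrtS) :
    (∀ l : ℝ, 0 < l →
      Ring.inverse (sq l) * A * Ring.inverse (sq l) =
        (sqrtS * Ring.inverse (sq l)) * B * (sqrtS * Ring.inverse (sq l))) ∧
    (∀ x : H,
      Tendsto (fun l : ℝ => (Ring.inverse (sq l)) (A ((Ring.inverse (sq l)) x)))
        (𝓝[>] (0:ℝ)) (𝓝 (B x))) := by
  have hS0 : (0:H →L[ℂ] H) ≤ S := (nonneg_iff_isPositive S).mpr hS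
  have hsa : IsSelfAdjoint S := hS.isSelfAdjoint
  have hspec : ∀ t ∈ spectrum ℝ S, 0 ≤ t := fun t ht => spectrum_nonneg_of_nonneg hS0 ht
  -- continuity facts
  have hcsqrt : ContinuousOn (fun t : ℝ => Real.sqrt t) (spectrum ℝ S) :=
    Real.continuous_sqrt.continuousOn
  have hcg : ∀ l : ℝ, 0 < l → Continuous (fun t : ℝ => Real.sqrt (l + t)) := fun l hl =>
    Real.continuous_sqrt.comp (continuous_const.add continuous_id)
  have hgpos : ∀ l : ℝ, 0 < l → ∀ t ∈ spectrum ℝ S, 0 < Real.sqrt (l + t) := fun l hl t ht =>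
    Real.sqrt_pos.mpr (by linarith [hspec t ht])
  have hcgi : ∀ l : ℝ, 0 < l →
      ContinuousOn (fun t : ℝ => (Real.sqrt (l + t))⁻¹) (spectrum ℝ S) := fun l hl =>
    ((hcg l hl).continuousOn).inv₀ (fun t ht => ne_of_gt (hgpos l hl t ht))
  have hcf : ∀ l : ℝ, 0 < l →
      ContinuousOn (fun t : ℝ => Real.sqrt t * (Real.sqrt (l + t))⁻¹) (spectrum ℝ S) :=
    fun l hl => hcsqrt.mul (hcgi l hl)
  have hcr : ∀ l : ℝ, 0 < l →
      ContinuousOn (fun t : ℝ => l * (l + t)⁻¹) (spectrum ℝ S) := fun l hl =>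
    continuousOn_const.mul (((continuous_const.add continuous_id).continuousOn).inv₀
      (fun t ht => by have := hspec t ht; show l + t ≠ 0; positivity))
  -- sqrtS = cfc √ S
  have hsqrtS0 : (0:H →L[ℂ] H) ≤ sqrtS := (nonneg_iff_isPositive _).mpr hsqrtS_pos
  have lemA : sqrtS = cfc (fun t : ℝ => Real.sqrt t) S := by
    have h1 : cfc (fun t : ℝ => Real.sqrt t) S * cfc (fun t : ℝ => Real.sqrt t) S = S := by
      rw [← cfc_mul _ _ S hcsqrt hcsqrt,
        cfc_congr (g := fun t : ℝ => t) (fun t ht => Real.mul_self_sqrt (hspec t ht))]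
      exact cfc_id' ℝ S
    rw [← CFC.sqrt_unique h1 (cfc_nonneg (fun t _ => Real.sqrt_nonneg t)),
      CFC.sqrt_unique hsqrtS_sq hsqrtS0]
  -- sq l = cfc (√(l+·)) S
  have lemB : ∀ l : ℝ, 0 < l → sq l = cfc (fun t : ℝ => Real.sqrt (l + t)) S := by
    intro l hl
    have h1 : cfc (fun t : ℝ => Real.sqrt (l + t)) S * cfc (fun t : ℝ => Real.sqrt (l + t)) S
        = (l : ℂ) • (1 : H →L[ℂ] H) + S := by
      rw [← cfc_mul _ _ S ((hcg l hl).continuousOn) ((hcg l hl).continuousOn),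
        cfc_congr (g := fun t : ℝ => l + t)
          (fun t ht => Real.mul_self_sqrt (by linarith [hspec t ht]))]
      rw [cfc_const_add l (fun t : ℝ => t) S continuous_id.continuousOn, cfc_id' ℝ S,
        Algebra.algebraMap_eq_smul_one, Complex.coe_smul]
    rw [← CFC.sqrt_unique h1 (cfc_nonneg (fun t _ => Real.sqrt_nonneg _)),
      CFC.sqrt_unique (hsq_sq l hl) ((nonneg_iff_isPositive _).mpr (hsq_pos l hl))]
  -- Ring.inverse (sq l) = cfc (√(l+·))⁻¹ S
  have lemC : ∀ l : ℝ, 0 < l →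
      Ring.inverse (sq l) = cfc (fun t : ℝ => (Real.sqrt (l + t))⁻¹) S := by
    intro l hl
    have hmul : sq l * cfc (fun t : ℝ => (Real.sqrt (l + t))⁻¹) S = 1 := by
      rw [lemB l hl, ← cfc_mul _ _ S ((hcg l hl).continuousOn) (hcgi l hl),
        cfc_congr (g := fun _ : ℝ => 1)
          (fun t ht => mul_inv_cancel₀ (ne_of_gt (hgpos l hl t ht)))]
      exact cfc_one ℝ S
    calc Ring.inverse (sq l)
        = Ring.inverse (sq l) * (sq l * cfc (fun t : ℝ => (Real.sqrt (l + t))⁻¹) S) := by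
          rw [hmul, mul_one]
      _ = (Ring.inverse (sq l) * sq l) * cfc (fun t : ℝ => (Real.sqrt (l + t))⁻¹) S := by
          rw [mul_assoc]
      _ = cfc (fun t : ℝ => (Real.sqrt (l + t))⁻¹) S := by
          rw [Ring.inverse_mul_cancel _ (hsq_unit l hl), one_mul]
  -- C l
  have lemD : ∀ l : ℝ, 0 < l → sqrtS * Ring.inverse (sq l)
      = cfc (fun t : ℝ => Real.sqrt t * (Real.sqrt (l + t))⁻¹) S := by
    intro l hl
    rw [lemA, lemC l hl, ← cfc_mul _ _ S hcsqrt (hcgi l hl)]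
  have hcomm : ∀ l : ℝ, 0 < l →
      Ring.inverse (sq l) * sqrtS = sqrtS * Ring.inverse (sq l) := by
    intro l hl
    rw [lemA, lemC l hl]
    exact (cfc_commute_cfc _ _ S).eq
  have part1 : ∀ l : ℝ, 0 < l →
      Ring.inverse (sq l) * A * Ring.inverse (sq l) =
        (sqrtS * Ring.inverse (sq l)) * B * (sqrtS * Ring.inverse (sq l)) := by
    intro l hl
    rw [hB]
    calc Ring.inverse (sq l) * (sqrtS * B * sqrtS) * Ring.inverse (sq l)
        = (Ring.inverse (sq l) * sqrtS) * B * (sqrtS * Ring.inverse (sq l)) := by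
          simp only [mul_assoc]
      _ = (sqrtS * Ring.inverse (sq l)) * B * (sqrtS * Ring.inverse (sq l)) := by
          rw [hcomm l hl]
  -- abbreviations
  set C : ℝ → H →L[ℂ] H := fun l => cfc (fun t : ℝ => Real.sqrt t * (Real.sqrt (l + t))⁻¹) S
    with hCdef
  set R : ℝ → H →L[ℂ] H := fun l => cfc (fun t : ℝ => l * (l + t)⁻¹) S with hRdef
  -- pointwise facts
  have hf0 : ∀ l : ℝ, 0 < l → ∀ t ∈ spectrum ℝ S,
      0 ≤ Real.sqrt t * (Real.sqrt (l + t))⁻¹ := fun l hl t ht =>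
    mul_nonneg (Real.sqrt_nonneg t) (inv_nonneg.mpr (Real.sqrt_nonneg _))
  have hf1 : ∀ l : ℝ, 0 < l → ∀ t ∈ spectrum ℝ S,
      Real.sqrt t * (Real.sqrt (l + t))⁻¹ ≤ 1 := by
    intro l hl t ht
    rw [← div_eq_mul_inv, div_le_one (hgpos l hl t ht)]
    exact Real.sqrt_le_sqrt (by linarith)
  have hr0 : ∀ l : ℝ, 0 < l → ∀ t ∈ spectrum ℝ S, 0 ≤ l * (l + t)⁻¹ := by
    intro l hl t ht
    have := hspec t ht
    positivity
  have hr1 : ∀ l : ℝ, 0 < l → ∀ t ∈ spectrum ℝ S, l * (l + t)⁻¹ ≤ 1 := by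
    intro l hl t ht
    have ht0 := hspec t ht
    rw [← div_eq_mul_inv, div_le_one (by linarith)]
    linarith
  -- norm bounds
  have hnormC : ∀ l : ℝ, 0 < l → ‖C l‖ ≤ 1 := by
    intro l hl
    refine norm_cfc_le zero_le_one fun t ht => ?_
    rw [Real.norm_eq_abs, abs_of_nonneg (hf0 l hl t ht)]
    exact hf1 l hl t ht
  have hnormR : ∀ l : ℝ, 0 < l → ‖R l‖ ≤ 1 := by
    intro l hl
    refine norm_cfc_le zero_le_one fun t ht => ?_
    rw [Real.norm_eq_abs, abs_of_nonneg (hr0 l hl t ht)]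
    exact hr1 l hl t ht
  -- the key quadratic estimate
  have hkey : ∀ l : ℝ, 0 < l → ∀ x : H, ‖x - C l x‖ ^ 2 ≤ ‖R l x‖ * ‖x‖ := by
    intro l hl x
    have hcont1 : ContinuousOn (fun t : ℝ => 1 - Real.sqrt t * (Real.sqrt (l + t))⁻¹)
        (spectrum ℝ S) := continuousOn_const.sub (hcf l hl)
    have hsub : cfc (fun t : ℝ => l * (l + t)⁻¹ -
        (1 - Real.sqrt t * (Real.sqrt (l + t))⁻¹) * (1 - Real.sqrt t * (Real.sqrt (l + t))⁻¹)) S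
        = R l - ((1 : H →L[ℂ] H) - C l) * ((1 : H →L[ℂ] H) - C l) := by
      rw [cfc_sub _ _ S (hcr l hl) (show ContinuousOn (fun t : ℝ => (1 - Real.sqrt t * (Real.sqrt (l + t))⁻¹) * (1 - Real.sqrt t * (Real.sqrt (l + t))⁻¹)) (spectrum ℝ S) from hcont1.mul hcont1),
        cfc_mul _ _ S hcont1 hcont1,
        cfc_sub (fun _ : ℝ => (1:ℝ)) _ S continuousOn_const (hcf l hl),
        cfc_const (1:ℝ) S, map_one]
    have hptwise : ∀ t ∈ spectrum ℝ S, 0 ≤ l * (l + t)⁻¹ -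
        (1 - Real.sqrt t * (Real.sqrt (l + t))⁻¹) * (1 - Real.sqrt t * (Real.sqrt (l + t))⁻¹) := by
      intro t ht
      have ht0 := hspec t ht
      have hlt0 : (0:ℝ) ≤ l + t := by linarith
      set s := Real.sqrt t * (Real.sqrt (l + t))⁻¹ with hs
      have h1 : s * s = t * (l + t)⁻¹ := by
        rw [hs, mul_mul_mul_comm, Real.mul_self_sqrt ht0, ← mul_inv, Real.mul_self_sqrt hlt0]
      have h2 : l * (l + t)⁻¹ = 1 - s * s := by
        rw [h1]
        field_simp
        ring
      have hs0 : 0 ≤ s := hf0 l hl t ht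
      have hs1 : s ≤ 1 := hf1 l hl t ht
      rw [h2]
      nlinarith
    have hPos : (0 : H →L[ℂ] H) ≤ R l - ((1 : H →L[ℂ] H) - C l) * ((1 : H →L[ℂ] H) - C l) := by
      rw [← hsub]
      exact cfc_nonneg hptwise
    have hp := ((nonneg_iff_isPositive _).mp hPos).inner_nonneg_left x
    -- selfadjointness of 1 - C l
    have hsaC : IsSelfAdjoint (C l) := cfc_predicate _ S
    have hsaD : IsSelfAdjoint ((1 : H →L[ℂ] H) - C l) := (IsSelfAdjoint.one (H →L[ℂ] H)).sub hsaC
    set D : H →L[ℂ] H := (1 : H →L[ℂ] H) - C l with hD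
    have hDD : RCLike.re (inner ℂ ((D * D) x) x : ℂ) = ‖D x‖ ^ 2 := by
      have h1 : (D * D) x = D (D x) := rfl
      have hadj : ContinuousLinearMap.adjoint D = D :=
        ContinuousLinearMap.star_eq_adjoint D ▸ hsaD.star_eq
      have h2 : (inner ℂ (D (D x)) x : ℂ) = inner ℂ (D x) (D x) := by
        have h4 := ContinuousLinearMap.adjoint_inner_left D x (D x)
        rwa [hadj] at h4
      rw [h1, h2, inner_self_eq_norm_sq]
    have hineq : ‖D x‖ ^ 2 ≤ RCLike.re (inner ℂ (R l x) x : ℂ) := by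
      have hexp : RCLike.re (inner ℂ ((R l - D * D) x) x : ℂ)
          = RCLike.re (inner ℂ (R l x) x : ℂ) - RCLike.re (inner ℂ ((D * D) x) x : ℂ) := by
        rw [ContinuousLinearMap.sub_apply, inner_sub_left, map_sub]
      replace hp := (RCLike.nonneg_iff.mp hp).1
      rw [hexp] at hp
      rw [← hDD]
      linarith
    have hfin : RCLike.re (inner ℂ (R l x) x : ℂ) ≤ ‖R l x‖ * ‖x‖ := by
      refine le_trans (le_trans (le_abs_self _) (RCLike.abs_re_le_norm _)) ?_
      exact norm_inner_le_norm _ _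
    have hDx : D x = x - C l x := by
      rw [hD, ContinuousLinearMap.sub_apply, ContinuousLinearMap.one_apply]
    rw [← hDx]
    exact le_trans hineq hfin
  -- R l ∘ S has small norm
  have hRS : ∀ l : ℝ, 0 < l → ∀ y : H, ‖R l (S y)‖ ≤ l * ‖y‖ := by
    intro l hl y
    have hmulRS : R l * S = cfc (fun t : ℝ => l * (l + t)⁻¹ * t) S := by
      have h := cfc_mul (fun t : ℝ => l * (l + t)⁻¹) (fun t : ℝ => t) S
        (hcr l hl) continuous_id.continuousOn
      rw [cfc_id' ℝ S] at h
      exact h.symm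
    have hnorm : ‖R l * S‖ ≤ l := by
      rw [hmulRS]
      refine norm_cfc_le hl.le fun t ht => ?_
      have ht0 := hspec t ht
      rw [Real.norm_eq_abs, abs_of_nonneg (mul_nonneg (hr0 l hl t ht) ht0)]
      calc l * (l + t)⁻¹ * t = l * ((l + t)⁻¹ * t) := by ring
        _ ≤ l * 1 := by
            refine mul_le_mul_of_nonneg_left ?_ hl.le
            rw [← div_eq_inv_mul, div_le_one (by linarith)]
            linarith
        _ = l := mul_one l
    calc ‖R l (S y)‖ = ‖(R l * S) y‖ := rfl
      _ ≤ ‖R l * S‖ * ‖y‖ := le_opNorm _ _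
      _ ≤ l * ‖y‖ := mul_le_mul_of_nonneg_right hnorm (norm_nonneg y)
  -- density of the range of S
  have hdense : DenseRange S := by
    have horth : (LinearMap.range (S : H →ₗ[ℂ] H))ᗮ = ⊥ := by
      rw [Submodule.eq_bot_iff]
      intro v hv
      have hall : ∀ w : H, (inner ℂ (S w) v : ℂ) = 0 := fun w =>
        (Submodule.mem_orthogonal _ v).mp hv (S w) (LinearMap.mem_range_self _ w)
      have hSv : S v = 0 := by
        have h2 : ∀ w : H, (inner ℂ (S v) w : ℂ) = 0 := by
          intro w
          have h3 : (inner ℂ v (S w) : ℂ) = 0 := by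
            rw [← inner_conj_symm, hall w, map_zero]
          calc (inner ℂ (S v) w : ℂ)
              = inner ℂ (ContinuousLinearMap.adjoint S v) w := by
                rw [show ContinuousLinearMap.adjoint S = S from
                  ContinuousLinearMap.star_eq_adjoint S ▸ hsa.star_eq]
            _ = inner ℂ v (S w) := ContinuousLinearMap.adjoint_inner_left S w v
            _ = 0 := h3
        have := h2 (S v)
        rwa [inner_self_eq_zero] at this
      have : S v = S 0 := by rw [hSv, map_zero]
      exact hSinj this
    have hcl : (LinearMap.range (S : H →ₗ[ℂ] H)).topologicalClosure = ⊤ := by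
      rw [Submodule.topologicalClosure_eq_top_iff, horth]
    have : Dense ((LinearMap.range (S : H →ₗ[ℂ] H) : Submodule ℂ H) : Set H) := by
      rw [← Submodule.dense_iff_topologicalClosure_eq_top] at hcl
      exact hcl
    simpa [LinearMap.coe_range, DenseRange] using this
  -- R l y → 0
  have hR0 : ∀ y : H, Tendsto (fun l : ℝ => R l y) (𝓝[>] (0:ℝ)) (𝓝 0) := by
    intro y
    rw [Metric.tendsto_nhdsWithin_nhds]
    intro ε hε
    obtain ⟨z, hz⟩ := hdense.exists_dist_lt y (by positivity : (0:ℝ) < ε / 2)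
    refine ⟨ε / (2 * (‖z‖ + 1)), by positivity, ?_⟩
    intro l hl hdist
    have hl' : 0 < l := hl
    have hld : l < ε / (2 * (‖z‖ + 1)) := by
      rwa [Real.dist_eq, sub_zero, abs_of_pos hl'] at hdist
    have h1 : ‖R l (y - S z)‖ ≤ ‖y - S z‖ := by
      calc ‖R l (y - S z)‖ ≤ ‖R l‖ * ‖y - S z‖ := le_opNorm _ _
        _ ≤ 1 * ‖y - S z‖ := mul_le_mul_of_nonneg_right (hnormR l hl') (norm_nonneg _)
        _ = ‖y - S z‖ := one_mul _
    have h2 : ‖R l (S z)‖ ≤ l * ‖z‖ := hRS l hl' z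
    have h3 : ‖y - S z‖ < ε / 2 := by
      rw [← dist_eq_norm]
      exact hz
    have h4 : l * ‖z‖ < ε / 2 := by
      have h5 : l * ‖z‖ ≤ l * (‖z‖ + 1) := by nlinarith [norm_nonneg z]
      have h6 : l * (‖z‖ + 1) < ε / 2 := by
        have h7 := mul_lt_mul_of_pos_right hld (show (0:ℝ) < ‖z‖ + 1 by positivity)
        have heq : ε / (2 * (‖z‖ + 1)) * (‖z‖ + 1) = ε / 2 := by
          field_simp
        rwa [heq] at h7
      linarith
    rw [dist_eq_norm, sub_zero]
    calc ‖R l y‖ = ‖R l (y - S z) + R l (S z)‖ := by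
          rw [← map_add, sub_add_cancel]
      _ ≤ ‖R l (y - S z)‖ + ‖R l (S z)‖ := norm_add_le _ _
      _ < ε / 2 + ε / 2 := by
          refine add_lt_add_of_le_of_lt (le_trans h1 h3.le) (lt_of_le_of_lt h2 h4)
      _ = ε := by ring
  -- C l y → y
  have hC0 : ∀ y : H, Tendsto (fun l : ℝ => C l y) (𝓝[>] (0:ℝ)) (𝓝 y) := by
    intro y
    rw [tendsto_iff_norm_sub_tendsto_zero]
    have hb : Tendsto (fun l : ℝ => Real.sqrt (‖R l y‖ * ‖y‖)) (𝓝[>] (0:ℝ)) (𝓝 0) := by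
      have h1 : Tendsto (fun l : ℝ => ‖R l y‖ * ‖y‖) (𝓝[>] (0:ℝ)) (𝓝 0) := by
        have := ((hR0 y).norm).mul_const ‖y‖
        simpa using this
      have h2 := (Real.continuous_sqrt.tendsto 0).comp h1
      simpa only [Function.comp_def, Real.sqrt_zero] using h2
    refine squeeze_zero' ?_ ?_ hb
    · filter_upwards with l using norm_nonneg _
    · filter_upwards [self_mem_nhdsWithin] with l hl
      have hl' : (0:ℝ) < l := hl
      have h1 : ‖C l y - y‖ = ‖y - C l y‖ := norm_sub_rev _ _
      rw [h1]
      have h2 := hkey l hl' y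
      have h3 : ‖y - C l y‖ = Real.sqrt (‖y - C l y‖ ^ 2) := by
        rw [Real.sqrt_sq (norm_nonneg _)]
      rw [h3]
      exact Real.sqrt_le_sqrt h2
  -- final assembly
  refine ⟨part1, ?_⟩
  intro x
  have h1 : Tendsto (fun l : ℝ => C l (B (C l x))) (𝓝[>] (0:ℝ)) (𝓝 (B x)) := by
    rw [tendsto_iff_norm_sub_tendsto_zero]
    have hb : Tendsto (fun l : ℝ => ‖B‖ * ‖C l x - x‖ + ‖C l (B x) - B x‖)
        (𝓝[>] (0:ℝ)) (𝓝 0) := by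
      have t1 : Tendsto (fun l : ℝ => ‖C l x - x‖) (𝓝[>] (0:ℝ)) (𝓝 0) :=
        tendsto_iff_norm_sub_tendsto_zero.mp (hC0 x)
      have t2 : Tendsto (fun l : ℝ => ‖C l (B x) - B x‖) (𝓝[>] (0:ℝ)) (𝓝 0) :=
        tendsto_iff_norm_sub_tendsto_zero.mp (hC0 (B x))
      have := (t1.const_mul ‖B‖).add t2
      simpa using this
    refine squeeze_zero' ?_ ?_ hb
    · filter_upwards with l using norm_nonneg _
    · filter_upwards [self_mem_nhdsWithin] with l hl
      have hl' : (0:ℝ) < l := hl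
      have hsplit : C l (B (C l x)) - B x
          = C l (B (C l x - x)) + (C l (B x) - B x) := by
        rw [map_sub, map_sub]
        abel
      calc ‖C l (B (C l x)) - B x‖
          = ‖C l (B (C l x - x)) + (C l (B x) - B x)‖ := by rw [hsplit]
        _ ≤ ‖C l (B (C l x - x))‖ + ‖C l (B x) - B x‖ := norm_add_le _ _
        _ ≤ ‖B‖ * ‖C l x - x‖ + ‖C l (B x) - B x‖ := by
            refine add_le_add_left ?_ _
            calc ‖C l (B (C l x - x))‖ ≤ ‖C l‖ * ‖B (C l x - x)‖ := le_opNorm _ _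
              _ ≤ 1 * ‖B (C l x - x)‖ :=
                  mul_le_mul_of_nonneg_right (hnormC l hl') (norm_nonneg _)
              _ = ‖B (C l x - x)‖ := one_mul _
              _ ≤ ‖B‖ * ‖C l x - x‖ := le_opNorm _ _
  refine h1.congr' ?_
  filter_upwards [self_mem_nhdsWithin] with l hl
  have hl' : (0:ℝ) < l := hl
  have he := part1 l hl'
  rw [lemD l hl'] at he
  have hfun := congrArg (fun T : H →L[ℂ] H => T x) he
  simp only [ContinuousLinearMap.mul_apply] at hfun
  simp only [hCdef]
  exact hfun.symm
end

section
/- Let C ≥ 0. The following are equivalent: (1) |⟪ψ, Aφ⟫|² ≤ C² · ⟪ψ, Sψ⟫ · ⟪φ, Sφ⟫ for all φ, ψ ∈ H; (2) there exists a bounded operator B : H → H with ‖B‖ ≤ C and A = S^{1/2} B S^{1/2}. (This expresses that the strong sector condition is equivalent to boundedness of S^{-1/2} A S^{-1/2} by C.) -/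
open ContinuousLinearMap Filter Topology

/-- The strong sector condition `|⟪ψ, Aφ⟫|² ≤ C² ⟪ψ, Sψ⟫ ⟪φ, Sφ⟫` is equivalent to the
existence of a bounded operator `B` with `‖B‖ ≤ C` and `A = S^{1/2} B S^{1/2}`
(i.e. to `‖S^{-1/2} A S^{-1/2}‖ ≤ C`). -/
theorem strong_sector_condition_iff_bounded
    {H : Type*} [NormedAddCommGroup H] [InnerProductSpace ℂ H] [CompleteSpace H]
    (S A : H →L[ℂ] H)
    (hS : S.IsPositive) (hSinj : Function.Injective S)
    (hA : ContinuousLinearMap.adjoint A = -A)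
    -- `S^{1/2}`: the (unique) positive square root of `S`
    (sqrtS : H →L[ℂ] H) (hsqrtS_pos : sqrtS.IsPositive) (hsqrtS_sq : sqrtS * sqrtS = S)
    (C : ℝ) (hC : 0 ≤ C) :
    (∀ φ ψ : H, ‖(inner ℂ ψ (A φ) : ℂ)‖ ^ 2 ≤
        C ^ 2 * S.reApplyInnerSelf ψ * S.reApplyInnerSelf φ)
    ↔
    (∃ B : H →L[ℂ] H, ‖B‖ ≤ C ∧ A = sqrtS * B * sqrtS) := by
  -- sqrtS is self-adjoint
  have hsa' : ContinuousLinearMap.adjoint sqrtS = sqrtS := by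
    rw [← ContinuousLinearMap.star_eq_adjoint]; exact hsqrtS_pos.isSelfAdjoint
  have hsa : ∀ x y : H, (inner ℂ (sqrtS x) y : ℂ) = inner ℂ x (sqrtS y) := by
    intro x y
    nth_rewrite 1 [← hsa']
    exact ContinuousLinearMap.adjoint_inner_left sqrtS y x
  -- ⟪x, S x⟫ = ‖sqrtS x‖²
  have norm_sq : ∀ x : H, S.reApplyInnerSelf x = ‖sqrtS x‖ ^ 2 := by
    intro x
    rw [ContinuousLinearMap.reApplyInnerSelf_apply, ← hsqrtS_sq]
    have : ((sqrtS * sqrtS) x : H) = sqrtS (sqrtS x) := rfl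
    rw [this, hsa, inner_self_eq_norm_sq]
  -- sqrtS is injective
  have hinj : Function.Injective sqrtS := by
    intro x y hxy
    apply hSinj
    rw [← hsqrtS_sq]
    show sqrtS (sqrtS x) = sqrtS (sqrtS y)
    rw [hxy]
  -- vectors orthogonal to the range of sqrtS vanish
  have key : ∀ v : H, (∀ ψ : H, (inner ℂ v (sqrtS ψ) : ℂ) = 0) → v = 0 := by
    intro v hv
    have h1 : sqrtS v = 0 := by
      apply ext_inner_right ℂ
      intro ψ
      rw [hsa, hv, inner_zero_left]
    exact hinj (by rw [h1, map_zero])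
  constructor
  · -- forward direction: construct B
    intro h
    -- pointwise bound
    have hb : ∀ φ ψ : H, ‖(inner ℂ ψ (A φ) : ℂ)‖ ≤ C * ‖sqrtS ψ‖ * ‖sqrtS φ‖ := by
      intro φ ψ
      have h2 := h φ ψ
      rw [norm_sq, norm_sq] at h2
      have h3 : C ^ 2 * ‖sqrtS ψ‖ ^ 2 * ‖sqrtS φ‖ ^ 2
          = (C * ‖sqrtS ψ‖ * ‖sqrtS φ‖) ^ 2 := by ring
      rw [h3] at h2
      have h4 : (0:ℝ) ≤ C * ‖sqrtS ψ‖ * ‖sqrtS φ‖ := by positivity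
      nlinarith [norm_nonneg (inner ℂ ψ (A φ) : ℂ)]
    -- the range of sqrtS, and the equivalence of H with it
    set p : Submodule ℂ H := LinearMap.range (sqrtS.toLinearMap) with hp
    have hmem : ∀ φ : H, sqrtS φ ∈ p := fun φ => ⟨φ, rfl⟩
    set e : H ≃ₗ[ℂ] p := LinearEquiv.ofInjective sqrtS.toLinearMap hinj with he
    have he_apply : ∀ φ : H, ((e φ : p) : H) = sqrtS φ := fun φ =>
      LinearEquiv.ofInjective_apply _ _
    have hcoe : ∀ y : p, sqrtS (e.symm y) = (y : H) := by
      intro y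
      rw [← he_apply, e.apply_symm_apply]
    -- Step 1: construct d φ = S^{-1/2} A φ via Hahn-Banach and Riesz
    have hd : ∀ φ : H, ∃ v : H,
        (∀ ψ : H, (inner ℂ v (sqrtS ψ) : ℂ) = inner ℂ (A φ) ψ) ∧ ‖v‖ ≤ C * ‖sqrtS φ‖ := by
      intro φ
      have hb' : ∀ y : p, ‖(innerSL ℂ (A φ)).toLinearMap.comp e.symm.toLinearMap y‖
          ≤ (C * ‖sqrtS φ‖) * ‖y‖ := by
        intro y
        have : ‖(inner ℂ (A φ) (e.symm y) : ℂ)‖ = ‖(inner ℂ (e.symm y) (A φ) : ℂ)‖ :=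
          norm_inner_symm _ _
        simp only [LinearMap.coe_comp, Function.comp_apply, ContinuousLinearMap.coe_coe,
          innerSL_apply_apply, LinearEquiv.coe_coe]
        rw [this]
        calc ‖(inner ℂ (e.symm y) (A φ) : ℂ)‖ ≤ C * ‖sqrtS (e.symm y)‖ * ‖sqrtS φ‖ := hb φ _
          _ = (C * ‖sqrtS φ‖) * ‖y‖ := by rw [hcoe]; rw [Submodule.norm_coe]; ring
      set f₀ : p →L[ℂ] ℂ :=
        LinearMap.mkContinuous _ (C * ‖sqrtS φ‖) hb' with hf₀
      obtain ⟨g, hg_eq, hg_norm⟩ := exists_extension_norm_eq p f₀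
      refine ⟨(InnerProductSpace.toDual ℂ H).symm g, ?_, ?_⟩
      · intro ψ
        rw [InnerProductSpace.toDual_symm_apply]
        have := hg_eq ⟨sqrtS ψ, hmem ψ⟩
        rw [this]
        show ((innerSL ℂ (A φ)).toLinearMap.comp e.symm.toLinearMap) ⟨sqrtS ψ, hmem ψ⟩
            = inner ℂ (A φ) ψ
        have hψ : e.symm ⟨sqrtS ψ, hmem ψ⟩ = ψ := by
          apply e.injective
          rw [e.apply_symm_apply]
          exact Subtype.ext (he_apply ψ).symm
        simp only [LinearMap.coe_comp, Function.comp_apply, ContinuousLinearMap.coe_coe,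
          innerSL_apply_apply, LinearEquiv.coe_coe, hψ]
      · rw [LinearIsometryEquiv.norm_map, hg_norm]
        exact LinearMap.mkContinuous_norm_le _ (by positivity) _
    choose d hd1 hd2 using hd
    -- linearity of d
    have d_add : ∀ φ₁ φ₂ : H, d (φ₁ + φ₂) = d φ₁ + d φ₂ := by
      intro φ₁ φ₂
      have : d (φ₁ + φ₂) - (d φ₁ + d φ₂) = 0 := by
        apply key
        intro ψ
        rw [inner_sub_left, inner_add_left, hd1, hd1, hd1, map_add, inner_add_left, sub_self]
      linear_combination (norm := abel) this
    have d_smul : ∀ (c : ℂ) (φ : H), d (c • φ) = c • d φ := by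
      intro c φ
      have : d (c • φ) - c • d φ = 0 := by
        apply key
        intro ψ
        rw [inner_sub_left, inner_smul_left, hd1, hd1, map_smul, inner_smul_left, sub_self]
      linear_combination (norm := abel) this
    set dlin : H →ₗ[ℂ] H :=
      { toFun := d, map_add' := d_add, map_smul' := d_smul } with hdlin
    -- Step 2: B₀ on the range of sqrtS
    have hB₀bound : ∀ y : p, ‖(dlin.comp e.symm.toLinearMap) y‖ ≤ C * ‖y‖ := by
      intro y
      calc ‖d (e.symm y)‖ ≤ C * ‖sqrtS (e.symm y)‖ := hd2 _
        _ = C * ‖y‖ := by rw [hcoe, Submodule.norm_coe]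
    set B₀ : p →L[ℂ] H := LinearMap.mkContinuous _ C hB₀bound with hB₀
    -- density of the range of sqrtS
    have hdense : DenseRange (p.subtypeL : p → H) := by
      have htop : p.topologicalClosure = ⊤ := by
        rw [Submodule.topologicalClosure_eq_top_iff, Submodule.eq_bot_iff]
        intro v hv
        apply key
        intro ψ
        have h0 : (inner ℂ (sqrtS ψ) v : ℂ) = 0 := hv (sqrtS ψ) (hmem ψ)
        rw [← inner_conj_symm, h0, map_zero]
      have : Dense (p : Set H) := by
        rw [Submodule.dense_iff_topologicalClosure_eq_top]
        exact htop
      rwa [DenseRange, Submodule.coe_subtypeL', Submodule.coe_subtype, Subtype.range_coe]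
    have hub : ∀ y : p, ‖y‖ ≤ ((1 : NNReal) : ℝ) * ‖p.subtypeL y‖ := by
      intro y
      rw [NNReal.coe_one, one_mul]
      exact le_of_eq (Submodule.norm_coe y).symm
    set B : H →L[ℂ] H := B₀.extend p.subtypeL with hB
    have hBnorm : ‖B‖ ≤ C := by
      calc ‖B‖ ≤ ((1 : NNReal) : ℝ) * ‖B₀‖ := ContinuousLinearMap.opNorm_extend_le (f := B₀) (e := p.subtypeL) hdense hub
        _ = ‖B₀‖ := by norm_num
        _ ≤ C := LinearMap.mkContinuous_norm_le _ hC _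
    refine ⟨B, hBnorm, ?_⟩
    ext φ
    have hBr : B (sqrtS φ) = d φ := by
      have h1 : sqrtS φ = p.subtypeL (e φ) := by
        simp only [Submodule.coe_subtypeL', Submodule.coe_subtype]
        exact (he_apply φ).symm
      rw [h1, ContinuousLinearMap.extend_eq (h_dense := hdense)
        (h_e := (ContinuousLinearMap.isUniformEmbedding_of_bound _ hub).isUniformInducing)]
      show dlin (e.symm (e φ)) = d φ
      rw [e.symm_apply_apply]
      rfl
    show A φ = sqrtS (B (sqrtS φ))
    rw [hBr]
    apply ext_inner_right ℂ
    intro ψ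
    rw [hsa, hd1]
  · -- backward direction
    rintro ⟨B, hBnorm, rfl⟩ φ ψ
    have h1 : (inner ℂ ψ (((sqrtS * B * sqrtS) φ : H)) : ℂ) = inner ℂ (sqrtS ψ) (B (sqrtS φ)) := by
      show (inner ℂ ψ (sqrtS (B (sqrtS φ))) : ℂ) = _
      rw [hsa]
    rw [h1, norm_sq, norm_sq]
    have h2 : ‖(inner ℂ (sqrtS ψ) (B (sqrtS φ)) : ℂ)‖ ≤ C * ‖sqrtS ψ‖ * ‖sqrtS φ‖ := by
      calc ‖(inner ℂ (sqrtS ψ) (B (sqrtS φ)) : ℂ)‖ ≤ ‖sqrtS ψ‖ * ‖B (sqrtS φ)‖ :=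
            norm_inner_le_norm _ _
        _ ≤ ‖sqrtS ψ‖ * (‖B‖ * ‖sqrtS φ‖) := by
            apply mul_le_mul_of_nonneg_left (B.le_opNorm _) (norm_nonneg _)
        _ ≤ ‖sqrtS ψ‖ * (C * ‖sqrtS φ‖) := by
            apply mul_le_mul_of_nonneg_left _ (norm_nonneg _)
            exact mul_le_mul_of_nonneg_right hBnorm (norm_nonneg _)
        _ = C * ‖sqrtS ψ‖ * ‖sqrtS φ‖ := by ring
    nlinarith [norm_nonneg (inner ℂ (sqrtS ψ) (B (sqrtS φ)) : ℂ), norm_nonneg (sqrtS ψ),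
      norm_nonneg (sqrtS φ)]
end

section
/- Let (H_n)_{n≥1} be a family of complex Hilbert spaces and H := {(φ_n)_{n≥1} : φ_n ∈ H_n, Σ_n ‖φ_n‖² < ∞} their ℓ²-direct sum (lp-sum with exponent 2). Let r ∈ ℕ, r ≥ 1, and for each pair m, n ≥ 1 with |m - n| ≤ r let B_{m,n} : H_n → H_m be a bounded operator with (B_{m,n})* = -B_{n,m}. Let C̃ ⊆ H be the subspace of finitely supported elements, and define the linear map B : C̃ → H by (Bφ)_m = Σ_{n : |m-n| ≤ r} B_{m,n} φ_n (a finite sum in each coordinate, landing in H since φ is finitely supported). Assume there is a positive nondecreasing sequence (c_n)_{n≥1} with Σ_{n≥1} 1/c_n = ∞ such that ‖B_{m,n}‖ ≤ c_n for all m ≠ n with |m - n| ≤ r. Then both subspaces (I - B)C̃ = {φ - Bφ : φ ∈ C̃} and (I + B)C̃ = {φ + Bφ : φ ∈ C̃} are dense in H. (In particular, B is essentially skew self-adjoint on C̃.) -/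
open Filter Topology

section Aux

open Finset
open scoped ENNReal

local notation "⟪" x ", " y "⟫" => @inner ℂ _ _ x y

variable {G : ℕ → Type*} [∀ n, NormedAddCommGroup (G n)] [∀ n, InnerProductSpace ℂ (G n)]
  [∀ n, CompleteSpace (G n)]

private lemma core_zero (r : ℕ)
    (Bmn : ∀ m n : ℕ, G n →L[ℂ] G m)
    (hband : ∀ m n : ℕ, r < Nat.dist m n → Bmn m n = 0)
    (hadj : ∀ m n : ℕ, ContinuousLinearMap.adjoint (Bmn m n) = -(Bmn n m))
    (c : ℕ → ℝ) (hc_pos : ∀ n, 0 < c n) (hc_mono : Monotone c)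
    (hc_div : ¬ Summable (fun n => 1 / c n))
    (hnorm : ∀ m n : ℕ, m ≠ n → ‖Bmn m n‖ ≤ c n)
    (ψ : lp G 2)
    (hψ : ∀ k, (ψ : ∀ n, G n) k
        = -∑ m ∈ Finset.Icc (k - r) (k + r), Bmn k m ((ψ : ∀ n, G n) m)) : ψ = 0 := by
  by_contra hne
  set f : ∀ n, G n := (ψ : ∀ n, G n) with hf_def
  set a : ℕ → ℝ := fun k => ‖f k‖ ^ 2 with ha_def
  have ha_nonneg : ∀ k, 0 ≤ a k := fun k => sq_nonneg _
  have ha : Summable a := by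
    have h2 : ((2 : ℝ≥0∞)).toReal = ((2 : ℕ) : ℝ) := by norm_num
    have := (lp.memℓp ψ).summable (p := 2) (by rw [h2]; norm_num)
    refine this.congr fun k => ?_
    rw [h2, Real.rpow_natCast]
  -- positivity of the total sum
  have hApos : 0 < ∑' k, a k := by
    have hk : ∃ k, f k ≠ 0 := by
      by_contra h
      push_neg at h
      exact hne (lp.ext (funext fun k => by simpa using h k))
    obtain ⟨k, hk⟩ := hk
    exact Summable.tsum_pos ha (fun i => ha_nonneg i) k (show (0:ℝ) < ‖f k‖ ^ 2 from pow_pos (norm_pos_iff.2 hk) 2)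
  set A : ℝ := ∑' k, a k with hA_def
  -- the skew form
  set F : ℕ → ℕ → ℂ := fun k m => ⟪f k, Bmn k m (f m)⟫ with hF_def
  have hFskew : ∀ k m, (starRingEnd ℂ) (F k m) = -(F m k) := by
    intro k m
    have h1 : (starRingEnd ℂ) (F k m) = ⟪Bmn k m (f m), f k⟫ := inner_conj_symm _ _
    rw [h1, ← ContinuousLinearMap.adjoint_inner_right, hadj,
      ContinuousLinearMap.neg_apply, inner_neg_right]
  have hFzero : ∀ k m, m ∉ Finset.Icc (k - r) (k + r) → F k m = 0 := by
    intro k m hm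
    have : Bmn k m = 0 := hband k m (by simp only [Finset.mem_Icc, Nat.dist] at *; omega)
    simp [hF_def, this]
  -- norm bound
  have hFbound : ∀ k m, k ≠ m → ‖F k m‖ ≤ ‖f k‖ * (c m * ‖f m‖) := by
    intro k m hkm
    calc ‖F k m‖ ≤ ‖f k‖ * ‖Bmn k m (f m)‖ := norm_inner_le_norm _ _
      _ ≤ ‖f k‖ * (c m * ‖f m‖) := by
          refine mul_le_mul_of_nonneg_left ?_ (norm_nonneg _)
          exact ((Bmn k m).le_opNorm _).trans
            (mul_le_mul_of_nonneg_right (hnorm k m hkm) (norm_nonneg _))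
  set t : ℕ → ℝ := fun N => ∑ j ∈ Finset.Icc (N + 1 - r) (N + r), a j with ht_def
  have ht_nonneg : ∀ N, 0 ≤ t N := fun N => Finset.sum_nonneg fun j _ => ha_nonneg j
  -- the key inequality
  have key : ∀ N, ∑ k ∈ Finset.range (N + 1), a k ≤ c (N + r) * (2 * r * t N) := by
    intro N
    set R : Finset ℕ := Finset.range (N + 1) with hR_def
    set J : Finset ℕ := Finset.Icc (N + 1 - r) (N + r) with hJ_def
    set D : ℂ := ∑ k ∈ R, ∑ m ∈ R, F k m with hD_def
    set E : ℂ := ∑ k ∈ R,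
      ∑ m ∈ (Finset.Icc (k - r) (k + r)).filter (fun m => m ∉ R), F k m with hE_def
    have hsum : ∀ k, (⟪f k, f k⟫ : ℂ) = -∑ m ∈ Finset.Icc (k - r) (k + r), F k m := by
      intro k
      have := congrArg (fun z => (inner (𝕜 := ℂ) (f k) z : ℂ)) (hψ k)
      simpa only [inner_neg_right, inner_sum] using this
    have hsplit : ∀ k, ∑ m ∈ Finset.Icc (k - r) (k + r), F k m
        = (∑ m ∈ (Finset.Icc (k - r) (k + r)).filter (fun m => m ∈ R), F k m)
          + ∑ m ∈ (Finset.Icc (k - r) (k + r)).filter (fun m => m ∉ R), F k m := by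
      intro k
      exact (Finset.sum_filter_add_sum_filter_not _ _ _).symm
    have hDpart : ∀ k, k ∈ R →
        (∑ m ∈ (Finset.Icc (k - r) (k + r)).filter (fun m => m ∈ R), F k m)
          = ∑ m ∈ R, F k m := by
      intro k _
      refine Finset.sum_subset (fun m hm => (Finset.mem_filter.1 hm).2) ?_
      intro m hmR hm
      refine hFzero k m fun hIcc => hm (Finset.mem_filter.2 ⟨hIcc, hmR⟩)
    have hSc : ((∑ k ∈ R, a k : ℝ) : ℂ) = -(D + E) := by
      calc ((∑ k ∈ R, a k : ℝ) : ℂ) = ∑ k ∈ R, (⟪f k, f k⟫ : ℂ) := by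
            push_cast
            refine Finset.sum_congr rfl fun k _ => ?_
            rw [inner_self_eq_norm_sq_to_K]
            simp only [ha_def]
            norm_cast
        _ = ∑ k ∈ R, (-∑ m ∈ Finset.Icc (k - r) (k + r), F k m) :=
            Finset.sum_congr rfl fun k _ => hsum k
        _ = -(D + E) := by
            rw [hD_def, hE_def, ← Finset.sum_add_distrib, ← Finset.sum_neg_distrib]
            refine Finset.sum_congr rfl fun k hk => ?_
            rw [hsplit k, hDpart k hk]
    have hDre : D.re = 0 := by
      have h1 : (starRingEnd ℂ) D = -D := by
        rw [hD_def, map_sum]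
        simp_rw [map_sum, hFskew]
        rw [Finset.sum_comm]
        simp_rw [← Finset.sum_neg_distrib]
      have h2 := Complex.add_conj D
      rw [h1, add_neg_cancel] at h2
      have := congrArg Complex.re h2.symm
      simpa using this
    have hS : ∑ k ∈ R, a k = -E.re := by
      have := congrArg Complex.re hSc
      simpa [hDre] using this
    -- bound E.re
    have hEbound : ‖E‖ ≤ ∑ k ∈ R,
        ∑ m ∈ (Finset.Icc (k - r) (k + r)).filter (fun m => m ∉ R),
          c (N + r) * ((a k + a m) / 2) := by
      refine (norm_sum_le _ _).trans (Finset.sum_le_sum fun k hk => ?_)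
      refine (norm_sum_le _ _).trans (Finset.sum_le_sum fun m hm => ?_)
      have hkN : k ≤ N := by
        rw [hR_def] at hk; simp only [Finset.mem_range] at hk; omega
      obtain ⟨hmIcc, hmR⟩ := Finset.mem_filter.1 hm
      have hmN : N + 1 ≤ m := by
        rw [hR_def] at hmR; simp only [Finset.mem_range, not_lt] at hmR; omega
      have hmNr : m ≤ N + r := by
        simp only [Finset.mem_Icc] at hmIcc; omega
      have hkm : k ≠ m := by omega
      have h1 := hFbound k m hkm
      have h2 : c m ≤ c (N + r) := hc_mono hmNr
      have h3 : 0 ≤ ‖f k‖ := norm_nonneg _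
      have h4 : 0 ≤ ‖f m‖ := norm_nonneg _
      have h5 : ‖f k‖ * ‖f m‖ ≤ (a k + a m) / 2 := by
        rw [ha_def]
        nlinarith [sq_nonneg (‖f k‖ - ‖f m‖)]
      have h6 : 0 < c (N + r) := hc_pos _
      calc ‖F k m‖ ≤ ‖f k‖ * (c m * ‖f m‖) := h1
        _ = c m * (‖f k‖ * ‖f m‖) := by ring
        _ ≤ c m * ((a k + a m) / 2) := mul_le_mul_of_nonneg_left h5 (hc_pos m).le
        _ ≤ c (N + r) * ((a k + a m) / 2) :=
            mul_le_mul_of_nonneg_right h2 (by linarith [ha_nonneg k, ha_nonneg m])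
    have hcount : ∑ k ∈ R,
        ∑ m ∈ (Finset.Icc (k - r) (k + r)).filter (fun m => m ∉ R),
          c (N + r) * ((a k + a m) / 2) ≤ c (N + r) * (2 * r * t N) := by
      set g : ℕ → ℝ := fun k =>
        ∑ m ∈ (Finset.Icc (k - r) (k + r)).filter (fun m => m ∉ R),
          c (N + r) * ((a k + a m) / 2) with hg_def
      have hg_nonneg : ∀ k, 0 ≤ g k := by
        intro k
        refine Finset.sum_nonneg fun m _ => ?_
        have := hc_pos (N + r)
        have := ha_nonneg k
        have := ha_nonneg m
        positivity
      set RF : Finset ℕ := R.filter (fun k => N + 1 - r ≤ k) with hRF_def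
      have step0 : ∑ k ∈ R, g k = ∑ k ∈ RF, g k := by
        refine (Finset.sum_filter_of_ne ?_).symm
        intro k hk hgk
        obtain ⟨m, hm, _⟩ := Finset.exists_ne_zero_of_sum_ne_zero hgk
        obtain ⟨hmIcc, hmR⟩ := Finset.mem_filter.1 hm
        simp only [Finset.mem_Icc] at hmIcc
        simp only [hR_def, Finset.mem_range, not_lt] at hmR
        omega
      have step1 : ∀ k ∈ RF, g k ≤ ∑ m ∈ J, c (N + r) * ((a k + a m) / 2) := by
        intro k hk
        obtain ⟨hkR, _⟩ := Finset.mem_filter.1 hk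
        simp only [hR_def, Finset.mem_range] at hkR
        refine Finset.sum_le_sum_of_subset_of_nonneg ?_ ?_
        · intro m hm
          obtain ⟨hmIcc, hmR⟩ := Finset.mem_filter.1 hm
          simp only [Finset.mem_Icc] at hmIcc
          simp only [hR_def, Finset.mem_range, not_lt] at hmR
          simp only [hJ_def, Finset.mem_Icc]
          omega
        · intro m _ _
          have := hc_pos (N + r); have := ha_nonneg k; have := ha_nonneg m
          positivity
      have step2 : RF ⊆ J := by
        intro k hk
        obtain ⟨hkR, hk2⟩ := Finset.mem_filter.1 hk
        simp only [hR_def, Finset.mem_range] at hkR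
        simp only [hJ_def, Finset.mem_Icc]
        omega
      have step3 : ∑ k ∈ RF, ∑ m ∈ J, c (N + r) * ((a k + a m) / 2)
          ≤ ∑ k ∈ J, ∑ m ∈ J, c (N + r) * ((a k + a m) / 2) := by
        refine Finset.sum_le_sum_of_subset_of_nonneg step2 ?_
        intro k _ _
        refine Finset.sum_nonneg fun m _ => ?_
        have := hc_pos (N + r); have := ha_nonneg k; have := ha_nonneg m
        positivity
      have hJcard : (J.card : ℝ) ≤ 2 * r := by
        rw [hJ_def, Nat.card_Icc]
        have : N + r + 1 - (N + 1 - r) ≤ 2 * r := by omega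
        calc ((N + r + 1 - (N + 1 - r) : ℕ) : ℝ) ≤ ((2 * r : ℕ) : ℝ) := by exact_mod_cast this
          _ = 2 * r := by push_cast; ring
      have step4 : ∑ k ∈ J, ∑ m ∈ J, c (N + r) * ((a k + a m) / 2)
          ≤ c (N + r) * (2 * r * t N) := by
        have htJ : ∑ m ∈ J, a m = t N := rfl
        have hexp : ∑ k ∈ J, ∑ m ∈ J, c (N + r) * ((a k + a m) / 2)
            = c (N + r) * ((J.card : ℝ) * t N) := by
          have h1 : ∀ k, ∑ m ∈ J, c (N + r) * ((a k + a m) / 2)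
              = c (N + r) * (((J.card : ℝ) * a k + t N) / 2) := by
            intro k
            rw [← Finset.mul_sum, ← Finset.sum_div, Finset.sum_add_distrib, Finset.sum_const,
              nsmul_eq_mul, htJ]
          simp_rw [h1]
          rw [← Finset.mul_sum, ← Finset.sum_div, Finset.sum_add_distrib, ← Finset.mul_sum,
            Finset.sum_const, nsmul_eq_mul, htJ]
          ring
        rw [hexp]
        have h2 := ht_nonneg N
        have h3 := (hc_pos (N + r)).le
        nlinarith [mul_le_mul_of_nonneg_right hJcard h2]
      calc ∑ k ∈ R, g k = ∑ k ∈ RF, g k := step0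
        _ ≤ ∑ k ∈ RF, ∑ m ∈ J, c (N + r) * ((a k + a m) / 2) := Finset.sum_le_sum step1
        _ ≤ ∑ k ∈ J, ∑ m ∈ J, c (N + r) * ((a k + a m) / 2) := step3
        _ ≤ c (N + r) * (2 * r * t N) := step4
    calc ∑ k ∈ R, a k = -E.re := hS
      _ ≤ ‖E‖ := by
          have h1 : |E.re| ≤ ‖E‖ := by
            exact Complex.abs_re_le_norm E
          have := abs_le.1 h1
          linarith
      _ ≤ _ := hEbound
      _ ≤ c (N + r) * (2 * r * t N) := hcount
  -- limit / summability argument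
  have htend : Tendsto (fun N => ∑ k ∈ Finset.range (N + 1), a k) atTop (𝓝 A) :=
    ha.hasSum.tendsto_sum_nat.comp (tendsto_add_atTop_nat 1)
  have hev : ∀ᶠ N in atTop, A / 2 ≤ ∑ k ∈ Finset.range (N + 1), a k :=
    htend.eventually (eventually_ge_nhds (half_lt_self hApos))
  obtain ⟨N₀, hN₀⟩ := eventually_atTop.1 hev
  have ht_le : ∀ N, t N ≤ ∑ i ∈ Finset.range (2 * r), a (N + 1 - r + i) := by
    intro N
    have hsub : Finset.Icc (N + 1 - r) (N + r)
        ⊆ (Finset.range (2 * r)).image (fun i => N + 1 - r + i) := by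
      intro j hj
      simp only [Finset.mem_Icc] at hj
      simp only [Finset.mem_image, Finset.mem_range]
      exact ⟨j - (N + 1 - r), by omega, by omega⟩
    calc t N ≤ ∑ j ∈ (Finset.range (2 * r)).image (fun i => N + 1 - r + i), a j :=
        Finset.sum_le_sum_of_subset_of_nonneg hsub (fun j _ _ => ha_nonneg j)
      _ = ∑ i ∈ Finset.range (2 * r), a (N + 1 - r + i) :=
        Finset.sum_image (by intro x _ y _ h; dsimp only at h; omega)
  have ht_sum : Summable t := by
    refine Summable.of_nonneg_of_le ht_nonneg ht_le ?_
    refine summable_sum fun i _ => ?_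
    have h4 : Summable (fun N : ℕ => a ((N + r) + 1 - r + i)) := by
      have heq : (fun N : ℕ => a ((N + r) + 1 - r + i)) = fun N => a (N + (1 + i)) := by
        funext N; congr 1; omega
      rw [heq]
      exact (summable_nat_add_iff (1 + i)).2 ha
    exact (summable_nat_add_iff r).1 h4
  have hstep : ∀ N, N₀ ≤ N → 1 / c (N + r) ≤ 4 * r / A * t N := by
    intro N hN
    have hb := (hN₀ N hN).trans (key N)
    have hcp := hc_pos (N + r)
    rw [div_le_iff₀ hcp]
    have h5 : (1 : ℝ) ≤ 2 / A * (c (N + r) * (2 * r * t N)) := by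
      have h6 := mul_le_mul_of_nonneg_left hb (by positivity : (0:ℝ) ≤ 2 / A)
      calc (1:ℝ) = 2 / A * (A / 2) := by field_simp
        _ ≤ _ := h6
    calc (1:ℝ) ≤ 2 / A * (c (N + r) * (2 * r * t N)) := h5
      _ = 4 * r / A * t N * c (N + r) := by ring
  apply hc_div
  have h0 : Summable fun M => 1 / c (M + N₀ + r) := by
    refine Summable.of_nonneg_of_le (fun M => le_of_lt (div_pos one_pos (hc_pos _)))
      (fun M => ?_) (((summable_nat_add_iff N₀).2 ht_sum).mul_left (4 * r / A))
    exact hstep (M + N₀) (Nat.le_add_left _ _)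
  have h1 : Summable fun N => 1 / c (N + r) := (summable_nat_add_iff N₀).1 h0
  exact (summable_nat_add_iff r).1 h1

private lemma dense_minus (r : ℕ)
    (Bmn : ∀ m n : ℕ, G n →L[ℂ] G m)
    (hband : ∀ m n : ℕ, r < Nat.dist m n → Bmn m n = 0)
    (hadj : ∀ m n : ℕ, ContinuousLinearMap.adjoint (Bmn m n) = -(Bmn n m))
    (c : ℕ → ℝ) (hc_pos : ∀ n, 0 < c n) (hc_mono : Monotone c)
    (hc_div : ¬ Summable (fun n => 1 / c n))
    (hnorm : ∀ m n : ℕ, m ≠ n → ‖Bmn m n‖ ≤ c n) :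
    Dense {y : lp G 2 | ∃ φ : lp G 2, {n | φ n ≠ 0}.Finite ∧
        ∀ m, y m = φ m - ∑' n, Bmn m n (φ n)} := by
  -- every band tsum is a finite sum
  have htb : ∀ (f : ∀ n, G n) (m : ℕ),
      ∑' n, Bmn m n (f n) = ∑ n ∈ Finset.Icc (m - r) (m + r), Bmn m n (f n) := by
    intro f m
    refine tsum_eq_sum fun n hn => ?_
    rw [hband m n (by simp only [Finset.mem_Icc, Nat.dist] at *; omega),
      ContinuousLinearMap.zero_apply]
  let K : Submodule ℂ (lp G 2) :=
    { carrier := {y : lp G 2 | ∃ φ : lp G 2, {n | φ n ≠ 0}.Finite ∧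
        ∀ m, y m = φ m - ∑' n, Bmn m n (φ n)}
      add_mem' := by
        rintro y y' ⟨φ, hφ, hy⟩ ⟨φ', hφ', hy'⟩
        refine ⟨φ + φ', (hφ.union hφ').subset fun n hn => ?_, fun m => ?_⟩
        · by_contra h
          simp only [Set.mem_union, Set.mem_setOf_eq, not_or, not_not] at h
          apply hn
          rw [lp.coeFn_add, Pi.add_apply, h.1, h.2, add_zero]
        · rw [lp.coeFn_add, Pi.add_apply, lp.coeFn_add, Pi.add_apply, hy m, hy' m,
            htb, htb, htb]
          simp only [Pi.add_apply, map_add, Finset.sum_add_distrib]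
          abel
      zero_mem' := by
        refine ⟨0, by simp [lp.coeFn_zero], fun m => ?_⟩
        simp [lp.coeFn_zero, htb]
      smul_mem' := by
        rintro z y ⟨φ, hφ, hy⟩
        refine ⟨z • φ, hφ.subset fun n hn => ?_, fun m => ?_⟩
        · by_contra h
          simp only [Set.mem_setOf_eq, not_not] at h
          apply hn
          rw [lp.coeFn_smul, Pi.smul_apply, h, smul_zero]
        · rw [lp.coeFn_smul, Pi.smul_apply, lp.coeFn_smul, Pi.smul_apply, hy m,
            htb, htb]
          simp only [Pi.smul_apply, map_smul, ← Finset.smul_sum, smul_sub] }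
  show Dense (K : Set (lp G 2))
  rw [Submodule.dense_iff_topologicalClosure_eq_top, Submodule.topologicalClosure_eq_top_iff]
  rw [Submodule.eq_bot_iff]
  intro ψ hψmem
  -- the single-coordinate band image, as an element of lp
  have hBsmem : ∀ (k : ℕ) (x : G k), Memℓp (fun m => Bmn m k x) 2 := by
    intro k x
    refine (memℓp_zero ?_).of_exponent_ge zero_le
    refine (Set.finite_Icc (k - r) (k + r)).subset fun m hm => ?_
    simp only [Set.mem_setOf_eq] at hm
    by_contra hmem
    simp only [Set.mem_Icc, not_and_or, not_le] at hmem
    apply hm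
    rw [hband m k (by simp only [Nat.dist]; omega), ContinuousLinearMap.zero_apply]
  set Bs : ∀ (k : ℕ), G k → lp G 2 := fun k x => ⟨fun m => Bmn m k x, hBsmem k x⟩ with hBs_def
  have hmemK : ∀ (k : ℕ) (x : G k), lp.single 2 k x - Bs k x ∈ K := by
    intro k x
    refine ⟨lp.single 2 k x, ?_, fun m => ?_⟩
    · refine (Set.finite_singleton k).subset fun n hn => ?_
      simp only [Set.mem_setOf_eq] at hn
      by_contra hnk
      exact hn (lp.single_apply_ne 2 k x hnk)
    · have ht : ∑' n, Bmn m n ((lp.single 2 k x : ∀ n, G n) n) = Bmn m k x := by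
        rw [tsum_eq_single k (fun n hn => by rw [lp.single_apply_ne 2 k x hn, map_zero]),
          lp.single_apply_self]
      rw [ht, lp.coeFn_sub, Pi.sub_apply]
  have hcoord : ∀ k, (ψ : ∀ n, G n) k
      = -∑ m ∈ Finset.Icc (k - r) (k + r), Bmn k m ((ψ : ∀ n, G n) m) := by
    intro k
    have h0 : ∀ x : G k,
        (⟪(lp.single 2 k x : lp G 2), ψ⟫ : ℂ) - ⟪Bs k x, ψ⟫ = 0 := by
      intro x
      have h := (Submodule.mem_orthogonal K ψ).1 hψmem _ (hmemK k x)
      rwa [inner_sub_left] at h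
    have h2 : ∀ x : G k, (⟪Bs k x, ψ⟫ : ℂ)
        = ⟪x, -∑ m ∈ Finset.Icc (k - r) (k + r), Bmn k m ((ψ : ∀ n, G n) m)⟫ := by
      intro x
      rw [lp.inner_eq_tsum]
      rw [show (fun m => (⟪(Bs k x : ∀ n, G n) m, (ψ : ∀ n, G n) m⟫ : ℂ))
          = fun m => ⟪Bmn m k x, (ψ : ∀ n, G n) m⟫ from rfl]
      rw [tsum_eq_sum (s := Finset.Icc (k - r) (k + r)) (fun m hm => by
        rw [hband m k (by simp only [Finset.mem_Icc, Nat.dist] at *; omega),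
          ContinuousLinearMap.zero_apply, inner_zero_left])]
      rw [inner_neg_right, inner_sum, ← Finset.sum_neg_distrib]
      refine Finset.sum_congr rfl fun m _ => ?_
      rw [← ContinuousLinearMap.adjoint_inner_right, hadj, ContinuousLinearMap.neg_apply,
        inner_neg_right]
    have h3 : ∀ x : G k,
        (⟪x, (ψ : ∀ n, G n) k + ∑ m ∈ Finset.Icc (k - r) (k + r),
          Bmn k m ((ψ : ∀ n, G n) m)⟫ : ℂ) = 0 := by
      intro x
      have h4 := h0 x
      rw [lp.inner_single_left, h2 x, inner_neg_right, sub_neg_eq_add, ← inner_add_right] at h4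
      exact h4
    have h5 := h3 ((ψ : ∀ n, G n) k + ∑ m ∈ Finset.Icc (k - r) (k + r),
      Bmn k m ((ψ : ∀ n, G n) m))
    rw [inner_self_eq_zero] at h5
    exact eq_neg_of_add_eq_zero_left h5
  exact core_zero r Bmn hband hadj c hc_pos hc_mono hc_div hnorm ψ hcoord

end Aux

/-- Essential skew self-adjointness of a graded band operator (key step in the proof of
Proposition 1 of the paper).  On the ℓ²-direct sum `H = ⊕ₙ Hₙ`, let `B` be the band
operator of width `r` determined by bounded blocks `B_{m,n} : Hₙ → Hₘ` (vanishing for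
`|m - n| > r`) with `(B_{m,n})* = -B_{n,m}`, defined on the subspace `C̃` of finitely
supported elements by `(Bφ)ₘ = Σₙ B_{m,n} φₙ`.  If `‖B_{m,n}‖ ≤ cₙ` for `m ≠ n`, where
`(cₙ)` is a positive nondecreasing sequence with `Σₙ 1/cₙ = ∞`, then `(I - B)C̃` and
`(I + B)C̃` are both dense in `H`. -/
theorem graded_band_operator_ranges_dense
    (G : ℕ → Type*) [∀ n, NormedAddCommGroup (G n)] [∀ n, InnerProductSpace ℂ (G n)]
    [∀ n, CompleteSpace (G n)]
    (r : ℕ) (hr : 1 ≤ r)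
    (Bmn : ∀ m n : ℕ, G n →L[ℂ] G m)
    -- band structure: `B_{m,n} = 0` for `|m - n| > r`
    (hband : ∀ m n : ℕ, r < Nat.dist m n → Bmn m n = 0)
    -- skew-adjointness of the blocks
    (hadj : ∀ m n : ℕ, ContinuousLinearMap.adjoint (Bmn m n) = -(Bmn n m))
    -- the sequence `(cₙ)`
    (c : ℕ → ℝ) (hc_pos : ∀ n, 0 < c n) (hc_mono : Monotone c)
    (hc_div : ¬ Summable (fun n => 1 / c n))
    -- off-diagonal norm bounds
    (hnorm : ∀ m n : ℕ, m ≠ n → ‖Bmn m n‖ ≤ c n) :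
    Dense {y : lp G 2 | ∃ φ : lp G 2, {n | φ n ≠ 0}.Finite ∧
        ∀ m, y m = φ m - ∑' n, Bmn m n (φ n)} ∧
    Dense {y : lp G 2 | ∃ φ : lp G 2, {n | φ n ≠ 0}.Finite ∧
        ∀ m, y m = φ m + ∑' n, Bmn m n (φ n)} := by
  constructor
  · exact dense_minus r Bmn hband hadj c hc_pos hc_mono hc_div hnorm
  · have h := dense_minus r (fun m n => -(Bmn m n))
      (fun m n hd => by simp only [hband m n hd, neg_zero])
      (fun m n => by simp only [map_neg, hadj, neg_neg])
      c hc_pos hc_mono hc_div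
      (fun m n hmn => by simpa using hnorm m n hmn)
    have hset : ∀ (φ : lp G 2) (m : ℕ),
        (φ : ∀ n, G n) m - ∑' n, (-(Bmn m n)) ((φ : ∀ n, G n) n)
          = (φ : ∀ n, G n) m + ∑' n, Bmn m n ((φ : ∀ n, G n) n) := by
      intro φ m
      rw [show (fun n => (-(Bmn m n)) ((φ : ∀ n, G n) n))
          = fun n => -(Bmn m n ((φ : ∀ n, G n) n)) from rfl, tsum_neg, sub_neg_eq_add]
    simpa only [hset] using h
end

section
/- Let f ∈ H and suppose that λ^{1/2}u_λ → 0 in H and S^{1/2}u_λ → v in H as λ → 0⁺, for some v ∈ H. Then lim_{λ→0⁺} Re⟪u_λ, f⟫ = ‖v‖². In particular, the limiting variance σ² := 2 lim_{λ→0⁺} Re⟪u_λ, f⟫ = 2‖v‖² exists and is a nonnegative real number. (Identification of the limiting variance in the Kipnis–Varadhan theorem; bounded-operator version.) -/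
open ContinuousLinearMap Filter Topology

/-- Identification of the limiting variance in the Kipnis–Varadhan theorem
(bounded-operator version).  If `λ^{1/2} u_λ → 0` and `S^{1/2} u_λ → v` as `λ → 0⁺`,
where `u_λ = (λI - G)⁻¹ f` and `G = -S + A`, then `Re⟪u_λ, f⟫ → ‖v‖²`; in particular
`σ² := 2 lim Re⟪u_λ, f⟫ = 2‖v‖²` exists and is nonnegative. -/
theorem limiting_variance
    {H : Type*} [NormedAddCommGroup H] [InnerProductSpace ℂ H] [CompleteSpace H]
    (S A : H →L[ℂ] H)
    (hS : S.IsPositive)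
    (hA : ContinuousLinearMap.adjoint A = -A)
    -- `S^{1/2}`: the (unique) positive square root of `S`
    (sqrtS : H →L[ℂ] H) (hsqrtS_pos : sqrtS.IsPositive) (hsqrtS_sq : sqrtS * sqrtS = S)
    -- the resolvent `(λ I - G)⁻¹` of `G = -S + A` exists for `λ > 0`
    (hres : ∀ l : ℝ, 0 < l → IsUnit ((l : ℂ) • (1 : H →L[ℂ] H) - (-S + A)))
    (f v : H)
    (hcondA : Tendsto (fun l : ℝ => ((Real.sqrt l : ℂ)) •
        (Ring.inverse ((l : ℂ) • (1 : H →L[ℂ] H) - (-S + A))) f)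
      (𝓝[>] (0:ℝ)) (𝓝 (0:H)))
    (hcondB : Tendsto (fun l : ℝ =>
        sqrtS ((Ring.inverse ((l : ℂ) • (1 : H →L[ℂ] H) - (-S + A))) f))
      (𝓝[>] (0:ℝ)) (𝓝 v)) :
    Tendsto (fun l : ℝ =>
        (inner ℂ ((Ring.inverse ((l : ℂ) • (1 : H →L[ℂ] H) - (-S + A))) f) f : ℂ).re)
      (𝓝[>] (0:ℝ)) (𝓝 (‖v‖ ^ 2)) ∧
    Tendsto (fun l : ℝ =>
        2 * (inner ℂ ((Ring.inverse ((l : ℂ) • (1 : H →L[ℂ] H) - (-S + A))) f) f : ℂ).re)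
      (𝓝[>] (0:ℝ)) (𝓝 (2 * ‖v‖ ^ 2)) ∧ 0 ≤ 2 * ‖v‖ ^ 2 := by
  set u : ℝ → H := fun l => (Ring.inverse ((l : ℂ) • (1 : H →L[ℂ] H) - (-S + A))) f with hu
  have key : ∀ l : ℝ, 0 < l →
      (inner ℂ (u l) f : ℂ).re = ‖(Real.sqrt l : ℂ) • u l‖ ^ 2 + ‖sqrtS (u l)‖ ^ 2 := by
    intro l hl
    have hTu : ((l : ℂ) • (1 : H →L[ℂ] H) - (-S + A)) (u l) = f := by
      have := Ring.mul_inverse_cancel _ (hres l hl)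
      calc ((l : ℂ) • (1 : H →L[ℂ] H) - (-S + A)) (u l)
          = (((l : ℂ) • (1 : H →L[ℂ] H) - (-S + A)) *
              Ring.inverse ((l : ℂ) • (1 : H →L[ℂ] H) - (-S + A))) f := rfl
        _ = f := by rw [this]; rfl
    have hf : f = (l : ℂ) • u l + S (u l) - A (u l) := by
      rw [← hTu]; simp [sub_apply, add_apply, smul_apply, one_apply]; abel
    have hAu : (inner ℂ (u l) (A (u l)) : ℂ).re = 0 := by
      have h1 : (inner ℂ ((ContinuousLinearMap.adjoint A) (u l)) (u l) : ℂ)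
          = inner ℂ (u l) (A (u l)) := adjoint_inner_left A (u l) (u l)
      rw [hA] at h1
      have h2 : (inner ℂ (A (u l)) (u l) : ℂ) = starRingEnd ℂ (inner ℂ (u l) (A (u l))) :=
        (inner_conj_symm (A (u l)) (u l)).symm
      simp only [neg_apply, inner_neg_left, h2] at h1
      have h3 := congrArg Complex.re h1
      have h4 : ((starRingEnd ℂ) (inner ℂ (u l) (A (u l))) : ℂ).re
          = (inner ℂ (u l) (A (u l)) : ℂ).re := Complex.conj_re _
      simp only [Complex.neg_re, h4] at h3
      linarith
    have hSu : (inner ℂ (u l) (S (u l)) : ℂ).re = ‖sqrtS (u l)‖ ^ 2 := by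
      have : S (u l) = sqrtS (sqrtS (u l)) := by rw [← hsqrtS_sq]; rfl
      rw [this, ← adjoint_inner_left, hsqrtS_pos.isSelfAdjoint.adjoint_eq]
      rw [inner_self_eq_norm_sq_to_K]
      norm_cast
    have hnorm : ‖(Real.sqrt l : ℂ) • u l‖ ^ 2 = l * ‖u l‖ ^ 2 := by
      rw [norm_smul]
      simp [Complex.norm_real, abs_of_nonneg (Real.sqrt_nonneg l), mul_pow,
        Real.sq_sqrt hl.le]
    rw [hf]
    rw [inner_sub_right, inner_add_right, inner_smul_right, inner_self_eq_norm_sq_to_K]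
    simp only [Complex.sub_re, Complex.add_re, hAu, hSu, hnorm]
    push_cast
    simp [Complex.mul_re]
    left
    norm_cast
  have h1 : Tendsto (fun l : ℝ => (inner ℂ (u l) f : ℂ).re) (𝓝[>] (0:ℝ)) (𝓝 (‖v‖ ^ 2)) := by
    have hA' : Tendsto (fun l : ℝ => ‖(Real.sqrt l : ℂ) • u l‖ ^ 2) (𝓝[>] (0:ℝ))
        (𝓝 0) := by
      have := (hcondA.norm.pow 2)
      simpa [hu] using this
    have hB' : Tendsto (fun l : ℝ => ‖sqrtS (u l)‖ ^ 2) (𝓝[>] (0:ℝ)) (𝓝 (‖v‖ ^ 2)) :=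
      hcondB.norm.pow 2
    have hsum := hA'.add hB'
    rw [zero_add] at hsum
    refine hsum.congr' ?_
    filter_upwards [self_mem_nhdsWithin] with l hl
    exact (key l hl).symm
  exact ⟨h1, h1.const_mul 2, by positivity⟩
end
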